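/- For ε ∈ (0, 1) and g̃₁ > max{g₁, 2} define g_ε(s) := (g(s + ε)/(s + ε))·s + ε·(1 + s)^{g̃₁ − 2}·s for s > 0. Then: (i) g_ε(s) ≥ g(s)/2 for every s ≥ 1; and (ii) ε·(1 + s)^{g̃₁ − 2} ≤ g_ε(s)/s ≤ (c(g₁)/ε)·(1 + s)^{g̃₁ − 2} for every s > 0, where c(g₁) is a constant depending only on g₁. -/

import Mathlib

/-- The regularized structure function
`g_ε(s) = (g(s+ε)/(s+ε)) s + ε (1+s)^{g̃₁−2} s`. -/
noncomputable def geps (g : ℝ → ℝ) (ε tg₁ : ℝ) (s : ℝ) : ℝ :=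
  g (s + ε) / (s + ε) * s + ε * (1 + s) ^ (tg₁ - 2) * s

/-- (i) `g_ε(s) ≥ g(s)/2` for `s ≥ 1`; (ii) `ε (1+s)^{g̃₁−2} ≤ g_ε(s)/s ≤ (c(g₁)/ε)(1+s)^{g̃₁−2}`
for `s > 0`, with `c(g₁)` depending only on `g₁`. -/
theorem stmt_15 (g₁ : ℝ) :
    ∃ c : ℝ, 0 < c ∧
      ∀ (g₀ : ℝ), 1 < g₀ → g₀ ≤ g₁ →
      ∀ (g g' : ℝ → ℝ),
        (∀ s : ℝ, 0 < s → 0 < g s) →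
        (∀ s : ℝ, 0 < s → HasDerivAt g (g' s) s) →
        ContinuousOn g' (Set.Ioi 0) →
        (∀ s : ℝ, 0 < s → g₀ - 1 ≤ s * g' s / g s ∧ s * g' s / g s ≤ g₁ - 1) →
        (∫ ρ in (0:ℝ)..1, g ρ) = 1 →
      ∀ ε : ℝ, 0 < ε → ε < 1 → ∀ tg₁ : ℝ, max g₁ 2 < tg₁ →
        (∀ s : ℝ, 1 ≤ s → g s / 2 ≤ geps g ε tg₁ s) ∧
        (∀ s : ℝ, 0 < s →
          ε * (1 + s) ^ (tg₁ - 2) ≤ geps g ε tg₁ s / s ∧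
          geps g ε tg₁ s / s ≤ c / ε * (1 + s) ^ (tg₁ - 2)) := by
  refine ⟨max g₁ 0 + 1, by positivity, ?_⟩
  intro g₀ hg₀ hg₀₁ g g' hgpos hgderiv hg'cont hgrowth hgint ε hε hε1 tg₁ htg₁
  have hg₁1 : 1 < g₁ := lt_of_lt_of_le hg₀ hg₀₁
  have hg₁0 : 0 < g₁ := by linarith
  have hgc : ContinuousOn g (Set.Ioi 0) := fun s hs =>
    (hgderiv s hs).continuousAt.continuousWithinAt
  -- upper growth: s * g' s ≤ (g₁ - 1) * g s
  have hup : ∀ s : ℝ, 0 < s → s * g' s ≤ (g₁ - 1) * g s := by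
    intro s hs
    have h2 := (hgrowth s hs).2
    rwa [div_le_iff₀ (hgpos s hs)] at h2
  have hlow : ∀ s : ℝ, 0 < s → 0 < g' s := by
    intro s hs
    have h1 := (hgrowth s hs).1
    have h1' : (g₀ - 1) * g s ≤ s * g' s := by
      rwa [le_div_iff₀ (hgpos s hs)] at h1
    nlinarith [hgpos s hs]
  -- g strictly monotone on Ioi 0
  have hmono : StrictMonoOn g (Set.Ioi 0) := by
    apply strictMonoOn_of_deriv_pos (convex_Ioi 0) hgc
    intro x hx
    rw [interior_Ioi] at hx
    rw [(hgderiv x hx).deriv]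
    exact hlow x hx
  -- the function h t = g t * t^(1-g₁) is antitone on Ioi 0
  have hhd : ∀ t : ℝ, (0:ℝ) < t →
      HasDerivAt (fun t => g t * t ^ (1 - g₁))
        (g' t * t ^ (1 - g₁) + g t * ((1 - g₁) * t ^ (1 - g₁ - 1))) t := by
    intro t ht
    exact (hgderiv t ht).mul (Real.hasDerivAt_rpow_const (Or.inl ht.ne'))
  have hanti : AntitoneOn (fun t => g t * t ^ (1 - g₁)) (Set.Ioi 0) := by
    apply antitoneOn_of_deriv_nonpos (convex_Ioi 0)
    · exact fun t ht => ((hhd t ht).continuousAt.continuousWithinAt)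
    · rw [interior_Ioi]
      exact fun t ht => ((hhd t ht).differentiableAt).differentiableWithinAt
    · intro x hx
      rw [interior_Ioi] at hx
      rw [(hhd x hx).deriv]
      have hx0 : (0:ℝ) < x := hx
      have hsplit : x ^ (1 - g₁) = x ^ (1 - g₁ - 1) * x := by
        rw [← Real.rpow_add_one hx0.ne' (1 - g₁ - 1), show 1 - g₁ - 1 + 1 = 1 - g₁ by ring]
      have hp : (0:ℝ) ≤ x ^ (1 - g₁ - 1) := (Real.rpow_pos_of_pos hx0 _).le
      have key : x * g' x + (1 - g₁) * g x ≤ 0 := by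
        have := hup x hx0; linarith
      calc g' x * x ^ (1 - g₁) + g x * ((1 - g₁) * x ^ (1 - g₁ - 1))
          = x ^ (1 - g₁ - 1) * (x * g' x + (1 - g₁) * g x) := by rw [hsplit]; ring
        _ ≤ 0 := mul_nonpos_of_nonneg_of_nonpos hp key
  -- consequences of antitonicity
  have hge1 : ∀ t : ℝ, 1 ≤ t → g t ≤ g 1 * t ^ (g₁ - 1) := by
    intro t ht
    have ht0 : (0:ℝ) < t := lt_of_lt_of_le one_pos ht
    have := hanti (by norm_num : (1:ℝ) ∈ Set.Ioi 0) (Set.mem_Ioi.2 ht0) ht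
    simp only [Real.one_rpow, mul_one] at this
    -- this : g t * t ^ (1 - g₁) ≤ g 1
    have hpow : (0:ℝ) < t ^ (1 - g₁) := Real.rpow_pos_of_pos ht0 _
    have h2 : g t ≤ g 1 / t ^ (1 - g₁) := (le_div_iff₀ hpow).2 this
    have hrw : g 1 / t ^ (1 - g₁) = g 1 * t ^ (g₁ - 1) := by
      rw [div_eq_mul_inv, ← Real.rpow_neg ht0.le]
      norm_num
    rwa [hrw] at h2
  have hle1 : ∀ t : ℝ, 0 < t → t ≤ 1 → g 1 * t ^ (g₁ - 1) ≤ g t := by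
    intro t ht0 ht1
    have := hanti (Set.mem_Ioi.2 ht0) (by norm_num : (1:ℝ) ∈ Set.Ioi 0) ht1
    simp only [Real.one_rpow, mul_one] at this
    -- this : g 1 ≤ g t * t ^ (1 - g₁)
    have hpow : (0:ℝ) < t ^ (1 - g₁) := Real.rpow_pos_of_pos ht0 _
    have h2 : g 1 / t ^ (1 - g₁) ≤ g t := (div_le_iff₀ hpow).2 this
    have hrw : g 1 / t ^ (1 - g₁) = g 1 * t ^ (g₁ - 1) := by
      rw [div_eq_mul_inv, ← Real.rpow_neg ht0.le]
      norm_num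
    rwa [hrw] at h2
  -- `g 1 ≤ g₁` from the normalization
  have hg1pos : 0 < g 1 := hgpos 1 one_pos
  have hg1le : g 1 ≤ g₁ := by
    have hIntg : MeasureTheory.IntegrableOn g (Set.Ioc 0 1) := by
      apply MeasureTheory.Integrable.mono'
        (g := fun _ => g 1)
        ((MeasureTheory.integrableOn_const_iff).2 (Or.inr (by simp)))
      · exact (hgc.mono Set.Ioc_subset_Ioi_self).aestronglyMeasurable measurableSet_Ioc
      · filter_upwards [MeasureTheory.ae_restrict_mem measurableSet_Ioc] with t ht
        rw [Real.norm_of_nonneg (hgpos t ht.1).le]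
        exact hmono.monotoneOn ht.1 (by norm_num) ht.2
    have hIntp : MeasureTheory.IntegrableOn (fun t => g 1 * t ^ (g₁ - 1)) (Set.Ioc 0 1) := by
      have : IntervalIntegrable (fun t : ℝ => t ^ (g₁ - 1)) MeasureTheory.volume 0 1 :=
        intervalIntegral.intervalIntegrable_rpow' (by linarith)
      exact ((this.1).const_mul (g 1))
    have hcomp : (∫ t in Set.Ioc (0:ℝ) 1, g 1 * t ^ (g₁ - 1)) ≤ ∫ t in Set.Ioc (0:ℝ) 1, g t :=
      MeasureTheory.setIntegral_mono_on hIntp hIntg measurableSet_Ioc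
        (fun t ht => hle1 t ht.1 ht.2)
    have heq1 : (∫ t in Set.Ioc (0:ℝ) 1, g t) = 1 := by
      rw [← intervalIntegral.integral_of_le (by norm_num : (0:ℝ) ≤ 1)]
      exact hgint
    have heq2 : (∫ t in Set.Ioc (0:ℝ) 1, g 1 * t ^ (g₁ - 1)) = g 1 / g₁ := by
      rw [← intervalIntegral.integral_of_le (by norm_num : (0:ℝ) ≤ 1),
        intervalIntegral.integral_const_mul, integral_rpow (Or.inl (by linarith))]
      rw [sub_add_cancel, Real.zero_rpow hg₁0.ne', Real.one_rpow]
      ring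
    rw [heq1, heq2] at hcomp
    rw [div_le_iff₀ hg₁0] at hcomp
    nlinarith
  constructor
  · -- part (i)
    intro s hs
    have hs0 : (0:ℝ) < s := lt_of_lt_of_le one_pos hs
    have hse : (0:ℝ) < s + ε := by linarith
    have hgle : g s ≤ g (s + ε) :=
      hmono.monotoneOn (Set.mem_Ioi.2 hs0) (Set.mem_Ioi.2 hse) (by linarith)
    have h2 : g s / 2 ≤ g (s + ε) / (s + ε) * s := by
      rw [div_mul_eq_mul_div, le_div_iff₀ hse, div_mul_eq_mul_div, div_le_iff₀ (by norm_num : (0:ℝ) < 2)]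
      have h1 : g s * (s + ε) ≤ g (s + ε) * (2 * s) := by
        have : s + ε ≤ 2 * s := by linarith
        nlinarith [hgpos s hs0, hgpos (s + ε) hse]
      linarith
    have h3 : 0 ≤ ε * (1 + s) ^ (tg₁ - 2) * s := by
      have : (0:ℝ) < (1 + s) ^ (tg₁ - 2) := Real.rpow_pos_of_pos (by linarith) _
      positivity
    unfold geps
    linarith
  · -- part (ii)
    intro s hs
    have hse : (0:ℝ) < s + ε := by linarith
    have hP : (0:ℝ) < (1 + s) ^ (tg₁ - 2) := Real.rpow_pos_of_pos (by linarith) _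
    have hP1 : (1:ℝ) ≤ (1 + s) ^ (tg₁ - 2) := by
      apply Real.one_le_rpow (by linarith)
      have := le_max_right g₁ 2
      linarith [lt_of_le_of_lt this htg₁]
    have hdiv : geps g ε tg₁ s / s = g (s + ε) / (s + ε) + ε * (1 + s) ^ (tg₁ - 2) := by
      unfold geps
      field_simp
    constructor
    · rw [hdiv]
      have : 0 ≤ g (s + ε) / (s + ε) := (div_pos (hgpos _ hse) hse).le
      linarith
    · rw [hdiv]
      -- bound the first term
      have hfirst : g (s + ε) / (s + ε) ≤ g₁ / ε * (1 + s) ^ (tg₁ - 2) := by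
        rcases le_or_gt 1 (s + ε) with hcase | hcase
        · -- s + ε ≥ 1
          have hgt : g (s + ε) ≤ g₁ * (s + ε) ^ (g₁ - 1) := by
            calc g (s + ε) ≤ g 1 * (s + ε) ^ (g₁ - 1) := hge1 _ hcase
              _ ≤ g₁ * (s + ε) ^ (g₁ - 1) := by
                  have := Real.rpow_pos_of_pos hse (g₁ - 1)
                  nlinarith
          have hq : g (s + ε) / (s + ε) ≤ g₁ * (s + ε) ^ (g₁ - 2) := by
            rw [div_le_iff₀ hse]
            calc g (s + ε) ≤ g₁ * (s + ε) ^ (g₁ - 1) := hgt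
              _ = g₁ * (s + ε) ^ (g₁ - 2) * (s + ε) := by
                  rw [mul_assoc, ← Real.rpow_add_one hse.ne' (g₁ - 2),
                    show g₁ - 2 + 1 = g₁ - 1 by ring]
          have hpow : (s + ε) ^ (g₁ - 2) ≤ (1 + s) ^ (tg₁ - 2) := by
            rcases le_or_gt 2 g₁ with h2 | h2
            · calc (s + ε) ^ (g₁ - 2) ≤ (1 + s) ^ (g₁ - 2) :=
                    Real.rpow_le_rpow hse.le (by linarith) (by linarith)
                _ ≤ (1 + s) ^ (tg₁ - 2) := by
                    apply Real.rpow_le_rpow_of_exponent_le (by linarith)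
                    have := le_max_left g₁ 2
                    linarith [lt_of_le_of_lt this htg₁]
            · calc (s + ε) ^ (g₁ - 2) ≤ 1 :=
                    Real.rpow_le_one_of_one_le_of_nonpos hcase (by linarith)
                _ ≤ (1 + s) ^ (tg₁ - 2) := hP1
          calc g (s + ε) / (s + ε) ≤ g₁ * (1 + s) ^ (tg₁ - 2) := by nlinarith
            _ ≤ g₁ / ε * (1 + s) ^ (tg₁ - 2) := by
                apply mul_le_mul_of_nonneg_right _ hP.le
                rw [le_div_iff₀ hε]
                nlinarith
        · -- s + ε < 1
          have hgt : g (s + ε) ≤ g₁ := by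
            calc g (s + ε) ≤ g 1 :=
                  hmono.monotoneOn (Set.mem_Ioi.2 hse) (by norm_num) hcase.le
              _ ≤ g₁ := hg1le
          calc g (s + ε) / (s + ε) ≤ g₁ / ε := by
                apply div_le_div₀ (by linarith) hgt hε (by linarith)
            _ ≤ g₁ / ε * (1 + s) ^ (tg₁ - 2) := by
                nlinarith [div_pos hg₁0 hε]
      have hsecond : ε * (1 + s) ^ (tg₁ - 2) ≤ 1 / ε * (1 + s) ^ (tg₁ - 2) := by
        apply mul_le_mul_of_nonneg_right _ hP.le
        rw [le_div_iff₀ hε]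
        nlinarith
      have hcle : g₁ / ε + 1 / ε ≤ (max g₁ 0 + 1) / ε := by
        rw [← add_div, div_le_div_iff₀ hε hε]
        have : g₁ ≤ max g₁ 0 := le_max_left _ _
        nlinarith
      calc g (s + ε) / (s + ε) + ε * (1 + s) ^ (tg₁ - 2)
          ≤ g₁ / ε * (1 + s) ^ (tg₁ - 2) + 1 / ε * (1 + s) ^ (tg₁ - 2) := by
            linarith
        _ = (g₁ / ε + 1 / ε) * (1 + s) ^ (tg₁ - 2) := by ring
        _ ≤ (max g₁ 0 + 1) / ε * (1 + s) ^ (tg₁ - 2) :=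
            mul_le_mul_of_nonneg_right hcle hP.le
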